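/- Let X₁, X₂, … be i.i.d. random variables with the SVG distribution with parameters a, b > 0 and location m = 0. Define V̂′_N = (1/N)∑_{i=1}^N X_i² and K̂′_N = (1/N)∑_{i=1}^N X_i⁴. Then there exists a constant C > 0 (depending on a and b) such that for all N ≥ 1, P(K̂′_N > 3 (V̂′_N)²) ≥ 1 − C/N. -/

import Mathlib

open MeasureTheory ProbabilityTheory Filter
open scoped Topology

/-- The symmetric variance-gamma (SVG) distribution with shape `a`, scale `b` and
location `m`: the law of `m + √(b·G)·Z` where `G ~ Gamma(a,1)` and `Z ~ N(0,1)`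
are independent. -/
noncomputable def svg (a b m : ℝ) : Measure ℝ :=
  ((gammaMeasure a 1).prod (gaussianReal 0 1)).map
    (fun p : ℝ × ℝ => m + Real.sqrt (b * p.1) * p.2)

/-- Empirical raw moment of order `k` (no centering). -/
noncomputable def empRawMom {Ω : Type*} (X : ℕ → Ω → ℝ) (k N : ℕ) (ω : Ω) : ℝ :=
  (∑ i ∈ Finset.range N, (X i ω) ^ k) / N

section Aux
open Real Set
open scoped ENNReal NNReal

lemma integral_withDensity_ofReal {p : ℝ → ℝ} (hp : Measurable p) (hp0 : 0 ≤ p) (g : ℝ → ℝ) :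
    ∫ x, g x ∂(volume.withDensity fun x => ENNReal.ofReal (p x)) = ∫ x, p x * g x := by
  have h : (fun x => ENNReal.ofReal (p x)) = (fun x => ((p x).toNNReal : ℝ≥0∞)) := rfl
  rw [h, integral_withDensity_eq_integral_smul (hp.real_toNNReal) g]
  refine integral_congr_ae (Filter.Eventually.of_forall fun x => ?_)
  simp [NNReal.smul_def, Real.coe_toNNReal _ (hp0 x)]

lemma integrable_withDensity_ofReal {p : ℝ → ℝ} (hp : Measurable p) (hp0 : 0 ≤ p) {g : ℝ → ℝ} :
    Integrable g (volume.withDensity fun x => ENNReal.ofReal (p x)) ↔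
      Integrable (fun x => p x * g x) volume := by
  have h : (fun x => ENNReal.ofReal (p x)) = (fun x => ((p x).toNNReal : ℝ≥0∞)) := rfl
  rw [h, integrable_withDensity_iff_integrable_coe_smul (hp.real_toNNReal)]
  exact integrable_congr (Filter.Eventually.of_forall fun x => by
    simp [NNReal.smul_def, Real.coe_toNNReal _ (hp0 x)])

lemma gaussianReal_eq_wd : gaussianReal 0 1 =
    volume.withDensity fun x => ENNReal.ofReal (gaussianPDFReal 0 1 x) := by
  rw [gaussianReal_of_var_ne_zero 0 one_ne_zero]; rfl

lemma gaussianPDFReal_std (x : ℝ) :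
    gaussianPDFReal 0 1 x = (Real.sqrt (2 * π))⁻¹ * Real.exp (-(1/2) * x ^ 2) := by
  simp only [gaussianPDFReal]
  norm_num
  ring_nf
  exact Or.inl trivial

lemma integrable_pow_gaussian (k : ℕ) : Integrable (fun x : ℝ => x ^ k) (gaussianReal 0 1) := by
  rw [gaussianReal_eq_wd,
    integrable_withDensity_ofReal (measurable_gaussianPDFReal 0 1)
      (fun x => gaussianPDFReal_nonneg 0 1 x)]
  have h := (integrable_rpow_mul_exp_neg_mul_sq (b := 1/2) (by norm_num) (s := (k : ℝ))
    (lt_of_lt_of_le neg_one_lt_zero (Nat.cast_nonneg k))).const_mul ((Real.sqrt (2 * π))⁻¹)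
  refine h.congr (Filter.Eventually.of_forall fun x => ?_)
  simp only [gaussianPDFReal_std, Real.rpow_natCast]
  ring

lemma integral_pow_gaussian (k : ℕ) :
    ∫ x, x ^ (2 * k) ∂(gaussianReal 0 1) =
      (Real.sqrt (2 * π))⁻¹ * ((1/2 : ℝ) ^ (-(2 * (k:ℝ) + 1) / 2) * Real.Gamma ((2 * k + 1) / 2)) := by
  rw [gaussianReal_eq_wd,
    integral_withDensity_ofReal (measurable_gaussianPDFReal 0 1)
      (fun x => gaussianPDFReal_nonneg 0 1 x)]
  simp_rw [gaussianPDFReal_std, mul_assoc, mul_comm (Real.exp _)]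
  rw [integral_const_mul]
  congr 1
  have heven : ∀ x : ℝ, x ^ (2 * k) * Real.exp (-(1/2) * x ^ 2) =
      (fun t : ℝ => t ^ (2 * k) * Real.exp (-(1/2) * t ^ 2)) |x| := by
    intro x
    simp only [pow_mul, sq_abs]
  calc ∫ x : ℝ, x ^ (2 * k) * Real.exp (-(1/2) * x ^ 2)
      = ∫ x : ℝ, (fun t : ℝ => t ^ (2 * k) * Real.exp (-(1/2) * t ^ 2)) |x| :=
        integral_congr_ae (Filter.Eventually.of_forall heven)
    _ = 2 * ∫ x in Ioi (0:ℝ), x ^ (2 * k) * Real.exp (-(1/2) * x ^ 2) := integral_comp_abs (f := fun t : ℝ => t ^ (2 * k) * Real.exp (-(1/2) * t ^ 2))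
    _ = 2 * ∫ x in Ioi (0:ℝ), x ^ ((2 * k : ℕ) : ℝ) * Real.exp (-(1/2) * x ^ (2:ℝ)) := by
        congr 1
        refine setIntegral_congr_fun measurableSet_Ioi (fun x hx => ?_)
        rw [Real.rpow_natCast, Real.rpow_two]
    _ = (1/2 : ℝ) ^ (-(2 * (k:ℝ) + 1) / 2) * Real.Gamma ((2 * k + 1) / 2) := by
        rw [integral_rpow_mul_exp_neg_mul_rpow (by norm_num) (lt_of_lt_of_le neg_one_lt_zero (by positivity)) (by norm_num)]
        push_cast
        ring

lemma half_rpow_eval (n : ℕ) : (1/2 : ℝ) ^ (-(2 * (n:ℝ) + 1) / 2) = 2 ^ n * Real.sqrt 2 := by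
  rw [one_div, ← Real.rpow_neg_one (2:ℝ), ← Real.rpow_natCast (2:ℝ) n, ← Real.rpow_mul (by norm_num),
    Real.sqrt_eq_rpow, ← Real.rpow_add (by norm_num)]
  congr 1
  ring

lemma gauss_mom_two : ∫ x, x ^ 2 ∂(gaussianReal 0 1) = 1 := by
  have h := integral_pow_gaussian 1
  have hg : Real.Gamma ((2 * (1:ℕ) + 1) / 2) = Real.sqrt π / 2 := by
    have h1 := Real.Gamma_add_one (s := 1/2) (by norm_num)
    rw [show ((2 * (1:ℕ) + 1) / 2 : ℝ) = 1/2 + 1 by norm_num, h1, Real.Gamma_one_half_eq]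
    ring
  rw [show 2 * 1 = 2 from rfl, hg, half_rpow_eval 1, Real.sqrt_mul (by norm_num)] at h
  rw [h]
  have h2 : Real.sqrt 2 > 0 := Real.sqrt_pos.mpr (by norm_num)
  have hπ : Real.sqrt π > 0 := Real.sqrt_pos.mpr Real.pi_pos
  field_simp

lemma gauss_mom_four : ∫ x, x ^ 4 ∂(gaussianReal 0 1) = 3 := by
  have h := integral_pow_gaussian 2
  have hg : Real.Gamma ((2 * (2:ℕ) + 1) / 2) = 3 * Real.sqrt π / 4 := by
    have h1 := Real.Gamma_add_one (s := 1/2) (by norm_num)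
    have h3 := Real.Gamma_add_one (s := 3/2) (by norm_num)
    rw [show ((2 * (2:ℕ) + 1) / 2 : ℝ) = 3/2 + 1 by norm_num, h3,
      show (3/2 : ℝ) = 1/2 + 1 by norm_num, h1, Real.Gamma_one_half_eq]
    ring
  rw [show 2 * 2 = 4 from rfl, hg, half_rpow_eval 2, Real.sqrt_mul (by norm_num)] at h
  rw [h]
  have h2 : Real.sqrt 2 > 0 := Real.sqrt_pos.mpr (by norm_num)
  have hπ : Real.sqrt π > 0 := Real.sqrt_pos.mpr Real.pi_pos
  field_simp
  ring

lemma gamma_pdf_mul_pow {a : ℝ} (ha : 0 < a) (k : ℕ) (x : ℝ) :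
    gammaPDFReal a 1 x * x ^ k =
      Set.indicator (Ici (0:ℝ)) (fun x => (Real.Gamma a)⁻¹ * (Real.exp (-x) * x ^ (a + k - 1))) x := by
  simp only [gammaPDFReal, Set.indicator, mem_Ici]
  split_ifs with h
  · rcases eq_or_lt_of_le h with rfl | hx
    · by_cases hk : k = 0
      · subst hk
        norm_num
      · have h1 : (1:ℝ) ≤ (k:ℝ) := by exact_mod_cast Nat.one_le_iff_ne_zero.mpr hk
        rw [zero_pow hk, Real.zero_rpow (by nlinarith : a + (k:ℝ) - 1 ≠ 0)]
        simp
    · rw [Real.one_rpow, ← Real.rpow_natCast x k,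
        show a + (k:ℝ) - 1 = (a - 1) + (k:ℝ) by ring, Real.rpow_add hx, one_mul]
      ring
  · simp

lemma gammaMeasure_eq_wd (a : ℝ) : gammaMeasure a 1 =
    volume.withDensity fun x => ENNReal.ofReal (gammaPDFReal a 1 x) := rfl

lemma integrable_pow_gamma {a : ℝ} (ha : 0 < a) (k : ℕ) :
    Integrable (fun x : ℝ => x ^ k) (gammaMeasure a 1) := by
  rw [gammaMeasure_eq_wd, integrable_withDensity_ofReal (measurable_gammaPDFReal a 1)
    (fun x => gammaPDFReal_nonneg ha one_pos x)]
  simp_rw [gamma_pdf_mul_pow ha k]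
  rw [integrable_indicator_iff measurableSet_Ici, integrableOn_Ici_iff_integrableOn_Ioi]
  exact (Real.GammaIntegral_convergent (show (0:ℝ) < a + k by positivity)).const_mul _

lemma integral_pow_gamma {a : ℝ} (ha : 0 < a) (k : ℕ) :
    ∫ x, x ^ k ∂(gammaMeasure a 1) = Real.Gamma (a + k) / Real.Gamma a := by
  rw [gammaMeasure_eq_wd, integral_withDensity_ofReal (measurable_gammaPDFReal a 1)
    (fun x => gammaPDFReal_nonneg ha one_pos x)]
  simp_rw [gamma_pdf_mul_pow ha k]
  rw [integral_indicator measurableSet_Ici, integral_Ici_eq_integral_Ioi, integral_const_mul]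
  have h : ∀ x ∈ Ioi (0:ℝ), Real.exp (-x) * x ^ (a + k - 1) = x ^ (a + k - 1) * Real.exp (-(1 * x)) := by
    intro x hx; rw [one_mul]; ring
  rw [setIntegral_congr_fun measurableSet_Ioi h,
    integral_rpow_mul_exp_neg_mul_Ioi (by positivity) one_pos]
  rw [one_div, inv_one, Real.one_rpow]
  ring


lemma gammaMeasure_Iio_zero (a : ℝ) : gammaMeasure a 1 (Iio 0) = 0 := by
  rw [gammaMeasure, withDensity_apply _ measurableSet_Iio]
  rw [setLIntegral_congr_fun measurableSet_Iio
    (fun x (hx : x ∈ Iio 0) => gammaPDF_of_neg hx)]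
  simp

section
variable {a b : ℝ}

lemma svg_meas_fun (m b : ℝ) : Measurable (fun p : ℝ × ℝ => m + Real.sqrt (b * p.1) * p.2) := by
  fun_prop

lemma svg_prod_ae (hb : 0 < b) (k : ℕ) :
    (fun p : ℝ × ℝ => ((0:ℝ) + Real.sqrt (b * p.1) * p.2) ^ (2 * k)) =ᵐ[
      (gammaMeasure a 1).prod (gaussianReal 0 1)]
    (fun p : ℝ × ℝ => (b ^ k * p.1 ^ k) * p.2 ^ (2 * k)) := by
  have h1 : ∀ᵐ p : ℝ × ℝ ∂((gammaMeasure a 1).prod (gaussianReal 0 1)), 0 ≤ p.1 := by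
    rw [ae_iff]
    have : {p : ℝ × ℝ | ¬ 0 ≤ p.1} = (Iio 0) ×ˢ (univ : Set ℝ) := by ext p; simp
    rw [this, Measure.prod_prod]
    rw [gammaMeasure_Iio_zero, zero_mul]
  filter_upwards [h1] with p hp
  have hbg : 0 ≤ b * p.1 := mul_nonneg hb.le hp
  rw [zero_add, mul_pow, pow_mul, Real.sq_sqrt hbg, mul_pow, pow_mul]

lemma integrable_pow_svg (ha : 0 < a) (hb : 0 < b) (k : ℕ) : Integrable (fun x : ℝ => x ^ (2 * k)) (svg a b 0) := by
  haveI := isProbabilityMeasure_gammaMeasure ha one_pos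
  rw [svg, integrable_map_measure (by fun_prop) (svg_meas_fun 0 b).aemeasurable]
  refine (Integrable.congr ?_ (svg_prod_ae hb k).symm)
  exact ((integrable_pow_gamma ha k).const_mul (b ^ k)).mul_prod (integrable_pow_gaussian (2 * k))

lemma integral_pow_svg (ha : 0 < a) (hb : 0 < b) (k : ℕ) :
    ∫ x, x ^ (2 * k) ∂(svg a b 0) =
      b ^ k * (Real.Gamma (a + k) / Real.Gamma a) * ∫ x, x ^ (2 * k) ∂(gaussianReal 0 1) := by
  haveI := isProbabilityMeasure_gammaMeasure ha one_pos
  rw [svg, integral_map (svg_meas_fun 0 b).aemeasurable (by fun_prop)]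
  rw [integral_congr_ae (svg_prod_ae hb k)]
  have := MeasureTheory.integral_prod_mul (μ := gammaMeasure a 1) (ν := gaussianReal 0 1)
    (fun x => b ^ k * x ^ k) (fun y => y ^ (2*k))
  rw [this, integral_const_mul, integral_pow_gamma ha k, mul_assoc]

end

lemma avg_concentration {Ω : Type*} [MeasurableSpace Ω] (P : Measure Ω) [IsProbabilityMeasure P]
    (Y : ℕ → Ω → ℝ) (hL2 : ∀ i, MemLp (Y i) 2 P)
    (hindep : ∀ i j, i ≠ j → IndepFun (Y i) (Y j) P)
    (μm v : ℝ) (hmean : ∀ i, P[Y i] = μm) (hvar : ∀ i, variance (Y i) P = v)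
    {ε : ℝ} (hε : 0 < ε) (N : ℕ) (hN : 1 ≤ N) :
    (P {ω | ε ≤ |(∑ i ∈ Finset.range N, Y i ω) / N - μm|}).toReal ≤ v / (ε ^ 2 * N) := by
  have hNpos : (0:ℝ) < N := by exact_mod_cast hN
  set S : Ω → ℝ := ∑ i ∈ Finset.range N, Y i with hS
  have hSL2 : MemLp S 2 P := memLp_finset_sum' _ (fun i _ => hL2 i)
  have hES : P[S] = N * μm := by
    simp only [hS, Finset.sum_apply]
    rw [integral_finset_sum _ (fun i _ => (hL2 i).integrable one_le_two)]
    simp [hmean, mul_comm]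
  have hVS : variance S P = N * v := by
    rw [hS, IndepFun.variance_sum (fun i _ => hL2 i)
      (fun i hi j hj hij => hindep i j hij)]
    simp [hvar, mul_comm]
  have hv : 0 ≤ v := by rw [← hvar 0]; exact variance_nonneg _ _
  have hcheb := meas_ge_le_variance_div_sq (μ := P) hSL2
    (c := N * ε) (by positivity)
  have hsub : {ω | ε ≤ |(∑ i ∈ Finset.range N, Y i ω) / N - μm|} ⊆
      {ω | N * ε ≤ |S ω - P[S]|} := by
    intro ω hω
    simp only [Set.mem_setOf_eq] at hω ⊢
    rw [hES]
    have : S ω - N * μm = N * ((∑ i ∈ Finset.range N, Y i ω) / N - μm) := by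
      field_simp [hS, Finset.sum_apply]
      simp [hS, Finset.sum_apply]
    rw [this, abs_mul, abs_of_nonneg hNpos.le]
    exact mul_le_mul_of_nonneg_left hω hNpos.le
  calc (P {ω | ε ≤ |(∑ i ∈ Finset.range N, Y i ω) / N - μm|}).toReal
      ≤ (ENNReal.ofReal (variance S P / (N * ε) ^ 2)).toReal := by
        refine ENNReal.toReal_mono ENNReal.ofReal_ne_top ?_
        exact le_trans (measure_mono hsub) hcheb
    _ ≤ v / (ε ^ 2 * N) := by
        have h0 : 0 ≤ variance S P / (↑N * ε) ^ 2 := div_nonneg (variance_nonneg S P) (by positivity)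
        rw [ENNReal.toReal_ofReal h0, hVS]
        rw [div_le_div_iff₀ (by positivity) (by positivity)]
        ring_nf
        nlinarith [sq_nonneg ε, hNpos]



end Aux

/-- Feasibility of the classic MME for the SVG distribution with `m = 0`:
`P(K̂′_N > 3 (V̂′_N)²) ≥ 1 − C/N`. -/
theorem svg_mme_feasible
    {Ω : Type*} [MeasurableSpace Ω] (P : Measure Ω) [IsProbabilityMeasure P]
    (a b : ℝ) (ha : 0 < a) (hb : 0 < b)
    (X : ℕ → Ω → ℝ) (hXmeas : ∀ i, Measurable (X i))
    (hindep : iIndepFun X P)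
    (hdist : ∀ i, Measure.map (X i) P = svg a b 0) :
    ∃ C : ℝ, 0 < C ∧ ∀ N : ℕ, 1 ≤ N →
      1 - C / N ≤
        (P {ω | 3 * (empRawMom X 2 N ω) ^ 2 < empRawMom X 4 N ω}).toReal := by
  classical
  set μ2 : ℝ := a * b with hμ2def
  set δ : ℝ := 3 * a * b ^ 2 with hδdef
  set μ4 : ℝ := 3 * μ2 ^ 2 + δ with hμ4def
  have hμ2pos : 0 < μ2 := by positivity
  have hδpos : 0 < δ := by positivity
  -- moments of svg
  have hM2 : ∫ x, x ^ 2 ∂(svg a b 0) = μ2 := by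
    have h := integral_pow_svg ha hb 1
    rw [show 2 * 1 = 2 from rfl, gauss_mom_two] at h
    rw [h, Nat.cast_one, Real.Gamma_add_one (ne_of_gt ha)]
    have hΓ : Real.Gamma a ≠ 0 := (Real.Gamma_pos_of_pos ha).ne'
    field_simp [hμ2def]
    ring
  have hM4 : ∫ x, x ^ 4 ∂(svg a b 0) = μ4 := by
    have h := integral_pow_svg ha hb 2
    rw [show 2 * 2 = 4 from rfl, gauss_mom_four] at h
    have e2 : a + ((2:ℕ):ℝ) = (a + 1) + 1 := by push_cast; ring
    rw [h, e2, Real.Gamma_add_one (by positivity), Real.Gamma_add_one (ne_of_gt ha)]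
    have hΓ : Real.Gamma a ≠ 0 := (Real.Gamma_pos_of_pos ha).ne'
    field_simp [hμ4def, hμ2def, hδdef]
    ring
  -- transfer to Ω
  have hmeaspow : ∀ (r : ℕ), Measurable (fun x : ℝ => x ^ r) := fun r => measurable_id.pow_const r
  have key : ∀ (r : ℕ) (i : ℕ), P[fun ω => X i ω ^ r] = ∫ x, x ^ r ∂(svg a b 0) := by
    intro r i
    rw [← hdist i, integral_map (hXmeas i).aemeasurable (hmeaspow r).aestronglyMeasurable]
  have keyL2 : ∀ (r : ℕ) (i : ℕ), MemLp (fun ω => X i ω ^ (2 * r)) 2 P := by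
    intro r i
    have hsvg : MemLp (fun x : ℝ => x ^ (2 * r)) 2 (svg a b 0) := by
      refine (memLp_two_iff_integrable_sq (hmeaspow (2*r)).aestronglyMeasurable).mpr ?_
      have := integrable_pow_svg ha hb (2 * r)
      refine this.congr (Filter.Eventually.of_forall fun x => ?_)
      simp only [← pow_mul]
      ring_nf
    have h := hsvg
    rw [← hdist i] at h
    exact (memLp_map_measure_iff (hmeaspow (2*r)).aestronglyMeasurable
      (hXmeas i).aemeasurable).mp h
  -- the two sequences
  set Y : ℕ → Ω → ℝ := fun i ω => X i ω ^ 2 with hYdef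
  set W : ℕ → Ω → ℝ := fun i ω => X i ω ^ 4 with hWdef
  have hYL2 : ∀ i, MemLp (Y i) 2 P := fun i => keyL2 1 i
  have hWL2 : ∀ i, MemLp (W i) 2 P := fun i => keyL2 2 i
  have hYmean : ∀ i, P[Y i] = μ2 := fun i => by rw [hYdef]; rw [key 2 i, hM2]
  have hWmean : ∀ i, P[W i] = μ4 := fun i => by rw [hWdef]; rw [key 4 i, hM4]
  set v2 : ℝ := (∫ x, x ^ 4 ∂(svg a b 0)) - μ2 ^ 2 with hv2def
  set v4 : ℝ := (∫ x, x ^ 8 ∂(svg a b 0)) - μ4 ^ 2 with hv4def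
  have hYvar : ∀ i, variance (Y i) P = v2 := by
    intro i
    rw [variance_eq_sub (hYL2 i)]
    have : (Y i) ^ 2 = fun ω => X i ω ^ 4 := by
      funext ω; simp [hYdef, ← pow_mul]
    rw [this, key 4 i, hYmean i]
  have hWvar : ∀ i, variance (W i) P = v4 := by
    intro i
    rw [variance_eq_sub (hWL2 i)]
    have : (W i) ^ 2 = fun ω => X i ω ^ 8 := by
      funext ω; simp [hWdef, ← pow_mul]
    rw [this, key 8 i, hWmean i]
  have hv2 : 0 ≤ v2 := by rw [← hYvar 0]; exact variance_nonneg _ _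
  have hv4 : 0 ≤ v4 := by rw [← hWvar 0]; exact variance_nonneg _ _
  have hYindep : ∀ i j, i ≠ j → IndepFun (Y i) (Y j) P := fun i j hij =>
    (hindep.indepFun hij).comp (hmeaspow 2) (hmeaspow 2)
  have hWindep : ∀ i j, i ≠ j → IndepFun (W i) (W j) P := fun i j hij =>
    (hindep.indepFun hij).comp (hmeaspow 4) (hmeaspow 4)
  -- choice of ε and C
  set ε : ℝ := min 1 (δ / (6 * μ2 + 4)) with hεdef
  have hεpos : 0 < ε := lt_min one_pos (by positivity)
  have hεle1 : ε ≤ 1 := min_le_left _ _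
  have hεδ : ε * (6 * μ2 + 4) ≤ δ := by
    have := min_le_right 1 (δ / (6 * μ2 + 4))
    calc ε * (6 * μ2 + 4) ≤ (δ / (6 * μ2 + 4)) * (6 * μ2 + 4) := by
          apply mul_le_mul_of_nonneg_right this (by positivity)
      _ = δ := by field_simp
  refine ⟨(v2 + v4) / ε ^ 2 + 1, by positivity, fun N hN => ?_⟩
  set C : ℝ := (v2 + v4) / ε ^ 2 + 1 with hCdef
  have hNpos : (0:ℝ) < N := by exact_mod_cast hN
  -- events
  set E : Set Ω := {ω | 3 * (empRawMom X 2 N ω) ^ 2 < empRawMom X 4 N ω} with hEdef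
  set A : Set Ω := {ω | ε ≤ |(∑ i ∈ Finset.range N, Y i ω) / N - μ2|} with hAdef
  set B : Set Ω := {ω | ε ≤ |(∑ i ∈ Finset.range N, W i ω) / N - μ4|} with hBdef
  have hEmeas : MeasurableSet E := by
    apply measurableSet_lt
    · apply Measurable.const_mul
      apply Measurable.pow_const
      exact (Finset.measurable_sum _ (fun i _ => (hXmeas i).pow_const 2)).div_const _
    · exact (Finset.measurable_sum _ (fun i _ => (hXmeas i).pow_const 4)).div_const _
  have hsub : Eᶜ ⊆ A ∪ B := by
    intro ω hω
    by_contra hcon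
    simp only [Set.mem_union, not_or] at hcon
    obtain ⟨hA, hB⟩ := hcon
    simp only [hAdef, Set.mem_setOf_eq, not_le] at hA
    simp only [hBdef, Set.mem_setOf_eq, not_le] at hB
    have hVeq : empRawMom X 2 N ω = (∑ i ∈ Finset.range N, Y i ω) / N := rfl
    have hKeq : empRawMom X 4 N ω = (∑ i ∈ Finset.range N, W i ω) / N := rfl
    set V := empRawMom X 2 N ω
    set K := empRawMom X 4 N ω
    rw [← hVeq] at hA
    rw [← hKeq] at hB
    have hVnn : 0 ≤ V := by
      rw [hVeq]
      apply div_nonneg _ (Nat.cast_nonneg N)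
      exact Finset.sum_nonneg (fun i _ => by positivity)
    rw [abs_lt] at hA hB
    have hgoal : 3 * V ^ 2 < K := by nlinarith [hA.1, hA.2, hB.1, hB.2]
    exact hω hgoal
  -- measure bound
  have hPA := avg_concentration P Y hYL2 hYindep μ2 v2 hYmean hYvar hεpos N hN
  have hPB := avg_concentration P W hWL2 hWindep μ4 v4 hWmean hWvar hεpos N hN
  have hcompl : (P Eᶜ).toReal ≤ C / N := by
    have h1 : P Eᶜ ≤ P A + P B := le_trans (measure_mono hsub) (measure_union_le A B)
    have h2 : (P Eᶜ).toReal ≤ (P A).toReal + (P B).toReal := by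
      rw [← ENNReal.toReal_add (measure_ne_top P A) (measure_ne_top P B)]
      exact ENNReal.toReal_mono (by finiteness) h1
    have h3 : (P A).toReal + (P B).toReal ≤ v2 / (ε^2 * N) + v4 / (ε^2 * N) :=
      add_le_add hPA hPB
    have h4 : v2 / (ε^2 * N) + v4 / (ε^2 * N) ≤ C / N := by
      rw [hCdef, ← add_div, ← div_div]
      rw [div_le_div_iff₀ (by positivity) hNpos]
      have : (v2 + v4) / ε ^ 2 * N ≤ ((v2 + v4) / ε ^ 2 + 1) * N := by nlinarith
      linarith
    linarith
  have hsplit : (P E).toReal = 1 - (P Eᶜ).toReal := by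
    have h := measure_compl hEmeas (measure_ne_top P E)
    have hle : P E ≤ 1 := prob_le_one
    rw [h, measure_univ, ENNReal.toReal_sub_of_le hle ENNReal.one_ne_top, ENNReal.toReal_one]
    ring
  rw [hsplit]
  linarith
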